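/- Let I = J + K be a Betti splitting of monomial ideals. Then reg(I) = max{reg(J), reg(K), reg(J∩K) − 1}. -/
import Mathlib


open MvPolynomial

/-- A (multigraded) minimal free resolution of an ideal `I ⊆ K[x_v : v ∈ σ]`,
recorded through the ranks `rk i` of its free modules, the multidegrees
`deg i j` of their basis elements, the augmentation `aug : F₀ → R` (whose image
is `I`) and the differentials `d i : F_{i+1} → F_i`, given by matrices. -/
structure MinFreeRes {K : Type} [Field K] {σ : Type} (I : Ideal (MvPolynomial σ K)) where
  rk : ℕ → ℕ
  deg : (i : ℕ) → Fin (rk i) → (σ →₀ ℕ)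
  aug : (Fin (rk 0) → MvPolynomial σ K) →ₗ[MvPolynomial σ K] MvPolynomial σ K
  d : (i : ℕ) → Matrix (Fin (rk i)) (Fin (rk (i + 1))) (MvPolynomial σ K)
  aug_homog : ∀ j, (aug (Pi.single j 1)).support ⊆ {deg 0 j}
  d_homog : ∀ i j k, ∀ m ∈ (d i j k).support, deg i j + m = deg (i + 1) k
  minimal : ∀ i j k, MvPolynomial.coeff (0 : σ →₀ ℕ) (d i j k) = 0
  range_aug : ∀ p, p ∈ LinearMap.range aug ↔ p ∈ I
  exact_zero : LinearMap.range (Matrix.mulVecLin (d 0)) = LinearMap.ker aug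
  exact_succ : ∀ i,
    LinearMap.range (Matrix.mulVecLin (d (i + 1))) = LinearMap.ker (Matrix.mulVecLin (d i))

/-- The multigraded Betti number `β_{i,a}(I)`: the number of basis elements of the
`i`-th free module in the minimal free resolution with multidegree `a`. -/
noncomputable def MinFreeRes.cnt {K : Type} [Field K] {σ : Type}
    {I : Ideal (MvPolynomial σ K)} (F : MinFreeRes I) (i : ℕ) (a : σ →₀ ℕ) : ℕ :=
  Nat.card {j : Fin (F.rk i) // F.deg i j = a}

/-- `F` witnesses that `pdim I = p`. -/
def MinFreeRes.IsPdim {K : Type} [Field K] {σ : Type}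
    {I : Ideal (MvPolynomial σ K)} (F : MinFreeRes I) (p : ℕ) : Prop :=
  F.rk p ≠ 0 ∧ ∀ i, p < i → F.rk i = 0

/-- `F` witnesses that `reg I = r`, i.e. `r = max { |a| - i : β_{i,a}(I) ≠ 0 }`. -/
def MinFreeRes.IsReg {K : Type} [Field K] {σ : Type}
    {I : Ideal (MvPolynomial σ K)} (F : MinFreeRes I) (r : ℤ) : Prop :=
  (∃ i j, ((F.deg i j).sum fun _ e => e : ℤ) - i = r) ∧
    ∀ i j, ((F.deg i j).sum fun _ e => e : ℤ) - i ≤ r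

/-- `I` is a monomial ideal. -/
def IsMonomialIdeal {K : Type} [Field K] {σ : Type} (I : Ideal (MvPolynomial σ K)) : Prop :=
  ∃ S : Set (σ →₀ ℕ), I = Ideal.span ((fun a => monomial a (1 : K)) '' S)

lemma MinFreeRes.cnt_ne_zero_iff {K : Type} [Field K] {σ : Type}
    {I : Ideal (MvPolynomial σ K)} (F : MinFreeRes I) (i : ℕ) (a : σ →₀ ℕ) :
    F.cnt i a ≠ 0 ↔ ∃ j, F.deg i j = a := by
  rw [MinFreeRes.cnt, Nat.card_ne_zero]
  constructor
  · rintro ⟨⟨⟨j, hj⟩⟩, _⟩; exact ⟨j, hj⟩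
  · rintro ⟨j, hj⟩; exact ⟨⟨⟨j, hj⟩⟩, inferInstance⟩

/-- If `I = J + L` is a Betti splitting, then
`reg I = max { reg J, reg L, reg (J ∩ L) - 1 }`. -/
theorem stmt11 {K : Type} [Field K] {σ : Type} (I J L : Ideal (MvPolynomial σ K))
    (hIJL : I = J + L)
    (FI : MinFreeRes I) (FJ : MinFreeRes J) (FL : MinFreeRes L) (FJL : MinFreeRes (J ⊓ L))
    (split0 : ∀ a, FI.cnt 0 a = FJ.cnt 0 a + FL.cnt 0 a)
    (split : ∀ i a, FI.cnt (i + 1) a = FJ.cnt (i + 1) a + FL.cnt (i + 1) a + FJL.cnt i a)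
    (rJ rL rJL : ℤ) (hrJ : FJ.IsReg rJ) (hrL : FL.IsReg rL) (hrJL : FJL.IsReg rJL) :
    FI.IsReg (max rJ (max rL (rJL - 1))) := by
  
  constructor
  · -- existence
    rcases le_total (max rL (rJL - 1)) rJ with h | h
    · obtain ⟨i, j, hij⟩ := hrJ.1
      have hc : FJ.cnt i (FJ.deg i j) ≠ 0 := (FJ.cnt_ne_zero_iff i _).2 ⟨j, rfl⟩
      have hcI : FI.cnt i (FJ.deg i j) ≠ 0 := by
        cases i with
        | zero => rw [split0]; omega
        | succ n => rw [split]; omega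
      obtain ⟨j', hj'⟩ := (FI.cnt_ne_zero_iff i _).1 hcI
      exact ⟨i, j', by rw [hj', hij, max_eq_left h]⟩
    · rcases le_total (rJL - 1) rL with h2 | h2
      · obtain ⟨i, j, hij⟩ := hrL.1
        have hc : FL.cnt i (FL.deg i j) ≠ 0 := (FL.cnt_ne_zero_iff i _).2 ⟨j, rfl⟩
        have hcI : FI.cnt i (FL.deg i j) ≠ 0 := by
          cases i with
          | zero => rw [split0]; omega
          | succ n => rw [split]; omega
        obtain ⟨j', hj'⟩ := (FI.cnt_ne_zero_iff i _).1 hcI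
        exact ⟨i, j', by rw [hj', hij, max_eq_right h, max_eq_left h2]⟩
      · obtain ⟨i, j, hij⟩ := hrJL.1
        have hc : FJL.cnt i (FJL.deg i j) ≠ 0 := (FJL.cnt_ne_zero_iff i _).2 ⟨j, rfl⟩
        have hcI : FI.cnt (i + 1) (FJL.deg i j) ≠ 0 := by rw [split]; omega
        obtain ⟨j', hj'⟩ := (FI.cnt_ne_zero_iff (i + 1) _).1 hcI
        refine ⟨i + 1, j', ?_⟩
        rw [hj', max_eq_right h, max_eq_right h2]
        push_cast
        omega
  · -- upper bound
    intro i j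
    have hc : FI.cnt i (FI.deg i j) ≠ 0 := (FI.cnt_ne_zero_iff i _).2 ⟨j, rfl⟩
    cases i with
    | zero =>
      rw [split0] at hc
      have h' : FJ.cnt 0 (FI.deg 0 j) ≠ 0 ∨ FL.cnt 0 (FI.deg 0 j) ≠ 0 := by omega
      rcases h' with h' | h'
      · obtain ⟨j', hj'⟩ := (FJ.cnt_ne_zero_iff 0 _).1 h'
        calc ((FI.deg 0 j).sum fun _ e => e : ℤ) - 0
            = ((FJ.deg 0 j').sum fun _ e => e : ℤ) - 0 := by rw [hj']
          _ ≤ rJ := hrJ.2 0 j'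
          _ ≤ _ := le_max_left _ _
      · obtain ⟨j', hj'⟩ := (FL.cnt_ne_zero_iff 0 _).1 h'
        calc ((FI.deg 0 j).sum fun _ e => e : ℤ) - 0
            = ((FL.deg 0 j').sum fun _ e => e : ℤ) - 0 := by rw [hj']
          _ ≤ rL := hrL.2 0 j'
          _ ≤ _ := le_trans (le_max_left _ _) (le_max_right _ _)
    | succ n =>
      rw [split] at hc
      have h' : FJ.cnt (n + 1) (FI.deg (n + 1) j) ≠ 0 ∨
          FL.cnt (n + 1) (FI.deg (n + 1) j) ≠ 0 ∨
          FJL.cnt n (FI.deg (n + 1) j) ≠ 0 := by omega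
      rcases h' with h' | h' | h'
      · obtain ⟨j', hj'⟩ := (FJ.cnt_ne_zero_iff (n + 1) _).1 h'
        calc ((FI.deg (n + 1) j).sum fun _ e => e : ℤ) - (n + 1)
            = ((FJ.deg (n + 1) j').sum fun _ e => e : ℤ) - (n + 1) := by rw [hj']
          _ ≤ rJ := by have := hrJ.2 (n + 1) j'; push_cast at this ⊢; omega
          _ ≤ _ := le_max_left _ _
      · obtain ⟨j', hj'⟩ := (FL.cnt_ne_zero_iff (n + 1) _).1 h'
        calc ((FI.deg (n + 1) j).sum fun _ e => e : ℤ) - (n + 1)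
            = ((FL.deg (n + 1) j').sum fun _ e => e : ℤ) - (n + 1) := by rw [hj']
          _ ≤ rL := by have := hrL.2 (n + 1) j'; push_cast at this ⊢; omega
          _ ≤ _ := le_trans (le_max_left _ _) (le_max_right _ _)
      · obtain ⟨j', hj'⟩ := (FJL.cnt_ne_zero_iff n _).1 h'
        have hb := hrJL.2 n j'
        rw [hj'] at hb
        have : ((FI.deg (n + 1) j).sum fun _ e => e : ℤ) - (n + 1) ≤ rJL - 1 := by
          push_cast at hb ⊢; omega
        exact le_trans this (le_trans (le_max_right _ _) (le_max_right _ _))
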